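/- Let Φ be a crystallographic root system. Any summable finite subset X ⊆ Φ (i.e. with Σ X ∈ Φ) having no vanishing subsum admits, for each chosen α ∈ X, a filtration of summable subsets {α} = X₁ ⊊ X₂ ⊊ ⋯ ⊊ X_{|X|} = X, where each X_i is summable (Σ X_i ∈ Φ) and |X_i| = i. -/

import Mathlib

open Pointwise

structure RootSys (V : Type*) [NormedAddCommGroup V] [InnerProductSpace ℝ V] where
  Φ : Set V
  finite : Φ.Finite
  nonzero : ∀ α ∈ Φ, α ≠ (0 : V)
  line : ∀ α ∈ Φ, Φ ∩ {x : V | ∃ t : ℝ, x = t • α} = {α, -α}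
  reflect : ∀ α ∈ Φ, ∀ β ∈ Φ, β - (2 * (inner ℝ α β : ℝ) / (inner ℝ α α : ℝ)) • α ∈ Φ

variable {V : Type*} [NormedAddCommGroup V] [InnerProductSpace ℝ V]

/-- `Φ` is crystallographic: `⟨α^∨, β⟩ ∈ ℤ` for all roots `α, β`. -/
def RootSys.IsCrystallographic (R : RootSys V) : Prop :=
  ∀ α ∈ R.Φ, ∀ β ∈ R.Φ, ∃ n : ℤ, 2 * (inner ℝ α β : ℝ) / (inner ℝ α α : ℝ) = (n : ℝ)

/-- A subset `S ⊆ Φ` is closed if it is stable under sums of two elements staying in `Φ`. -/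
def RootSys.IsClosedSubset (R : RootSys V) (S : Set V) : Prop :=
  ∀ α ∈ S, ∀ β ∈ S, α + β ∈ R.Φ → α + β ∈ S

/-- A set of roots is antisymmetric if it never contains both `α` and `-α`. -/
def IsAntisymSet (S : Set V) : Prop := ∀ α ∈ S, -α ∉ S

/-- A `Φ`-poset: an antisymmetric closed subset of `Φ`. -/
def RootSys.IsPoset (R : RootSys V) (S : Set V) : Prop :=
  S ⊆ R.Φ ∧ IsAntisymSet S ∧ R.IsClosedSubset S

/-- Closure: roots that are nonnegative integer combinations (multiset sums) of elements of `T`. -/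
def RootSys.clos (R : RootSys V) (T : Set V) : Set V :=
  {γ ∈ R.Φ | ∃ M : Multiset V, (∀ x ∈ M, x ∈ T) ∧ M.sum = γ}

/-- Nonnegative integer combinations (multiset sums) of elements of `T`. -/
def nncomb (T : Set V) : Set V :=
  {v | ∃ M : Multiset V, (∀ x ∈ M, x ∈ T) ∧ M.sum = v}

/-- A root system equipped with a generic linear functional determining positive roots. -/
structure PosRootSys (V : Type*) [NormedAddCommGroup V] [InnerProductSpace ℝ V]
    extends RootSys V where
  f : V →ₗ[ℝ] ℝ
  generic : ∀ α ∈ Φ, f α ≠ 0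

def PosRootSys.Pos (P : PosRootSys V) : Set V := {α ∈ P.Φ | 0 < P.f α}

def PosRootSys.Neg (P : PosRootSys V) : Set V := {α ∈ P.Φ | P.f α < 0}

/-- The weak order: `R ≼ S` iff `R⁺ ⊇ S⁺` and `R⁻ ⊆ S⁻`. -/
def PosRootSys.wle (P : PosRootSys V) (R S : Set V) : Prop :=
  S ∩ P.Pos ⊆ R ∩ P.Pos ∧ R ∩ P.Neg ⊆ S ∩ P.Neg

/-- `R` is semiclosed if both `R⁺` and `R⁻` are closed. -/
def PosRootSys.SemiClosed (P : PosRootSys V) (S : Set V) : Prop :=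
  S ⊆ P.Φ ∧ P.toRootSys.IsClosedSubset (S ∩ P.Pos) ∧
    P.toRootSys.IsClosedSubset (S ∩ P.Neg)

/-- Negative closure deletion. -/
def PosRootSys.ncd (P : PosRootSys V) (S : Set V) : Set V :=
  S \ {α | α ∈ S ∩ P.Neg ∧ ∃ X : Finset V, ↑X ⊆ S ∩ P.Pos ∧ α + X.sum id ∈ P.Φ \ S}

/-- Positive closure deletion. -/
def PosRootSys.pcd (P : PosRootSys V) (S : Set V) : Set V :=
  S \ {α | α ∈ S ∩ P.Pos ∧ ∃ X : Finset V, ↑X ⊆ S ∩ P.Neg ∧ α + X.sum id ∈ P.Φ \ S}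

/-- Meet formula on closed subsets. -/
def PosRootSys.wmeet (P : PosRootSys V) (R S : Set V) : Set V :=
  P.ncd (P.toRootSys.clos ((R ∪ S) ∩ P.Pos) ∪ ((R ∩ S) ∩ P.Neg))

/-- Join formula on closed subsets. -/
def PosRootSys.wjoin (P : PosRootSys V) (R S : Set V) : Set V :=
  P.pcd (((R ∩ S) ∩ P.Pos) ∪ P.toRootSys.clos ((R ∪ S) ∩ P.Neg))

open scoped RealInnerProductSpace

lemma RootSys.neg_mem (R : RootSys V) {α : V} (hα : α ∈ R.Φ) : -α ∈ R.Φ := by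
  have h := R.line α hα
  have : -α ∈ ({α, -α} : Set V) := by simp
  rw [← h] at this
  exact this.1

lemma RootSys.add_mem_of_inner_neg (R : RootSys V) (hcr : R.IsCrystallographic)
    {α β : V} (hα : α ∈ R.Φ) (hβ : β ∈ R.Φ) (hip : ⟪α, β⟫ < 0) (hne : α + β ≠ 0) :
    α + β ∈ R.Φ := by
  obtain ⟨n₁, hn₁⟩ := hcr α hα β hβ
  obtain ⟨n₂, hn₂⟩ := hcr β hβ α hα
  have hα0 : α ≠ 0 := R.nonzero α hα
  have hβ0 : β ≠ 0 := R.nonzero β hβ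
  have ha : (0:ℝ) < ⟪α, α⟫ := by
    rw [real_inner_self_eq_norm_sq]; exact pow_pos (norm_pos_iff.mpr hα0) 2
  have hb : (0:ℝ) < ⟪β, β⟫ := by
    rw [real_inner_self_eq_norm_sq]; exact pow_pos (norm_pos_iff.mpr hβ0) 2
  -- strict Cauchy-Schwarz
  have hcs : ⟪α, β⟫ * ⟪α, β⟫ < ⟪α, α⟫ * ⟪β, β⟫ := by
    rcases lt_or_eq_of_le (real_inner_mul_inner_self_le α β) with h | h
    · exact h
    · exfalso
      have heq : ‖⟪α, β⟫‖ = ‖α‖ * ‖β‖ := by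
        have h1 : ⟪α, α⟫ = ‖α‖ * ‖α‖ := real_inner_self_eq_norm_mul_norm α
        have h2 : ⟪β, β⟫ = ‖β‖ * ‖β‖ := real_inner_self_eq_norm_mul_norm β
        have h3 : ‖⟪α, β⟫‖ * ‖⟪α, β⟫‖ = (‖α‖ * ‖β‖) * (‖α‖ * ‖β‖) := by
          rw [Real.norm_eq_abs, abs_mul_abs_self]
          rw [h, h1, h2]; ring
        have := mul_self_eq_mul_self_iff.mp h3
        rcases this with h' | h'
        · exact h'
        · have : 0 ≤ ‖⟪α, β⟫‖ := norm_nonneg _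
          have hpos : 0 < ‖α‖ * ‖β‖ := mul_pos (norm_pos_iff.mpr hα0) (norm_pos_iff.mpr hβ0)
          linarith
      obtain ⟨r, hr0, hr⟩ := (norm_inner_eq_norm_iff hα0 hβ0).mp heq
      have : β ∈ R.Φ ∩ {x : V | ∃ t : ℝ, x = t • α} := ⟨hβ, ⟨r, hr.symm ▸ rfl⟩⟩
      rw [R.line α hα] at this
      simp only [Set.mem_insert_iff, Set.mem_singleton_iff] at this
      rcases this with h' | h'
      · rw [h'] at hip
        linarith
      · rw [h'] at hne
        simp at hne
  have hn₁neg : n₁ ≤ -1 := by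
    have h0 : (n₁ : ℝ) < 0 := by rw [← hn₁]; exact div_neg_of_neg_of_pos (by linarith) ha
    have : n₁ < 0 := by exact_mod_cast h0
    omega
  have hn₂neg : n₂ ≤ -1 := by
    have h0 : (n₂ : ℝ) < 0 := by
      rw [← hn₂]
      exact div_neg_of_neg_of_pos (by rw [real_inner_comm]; linarith) hb
    have : n₂ < 0 := by exact_mod_cast h0
    omega
  have e1 : (n₁ : ℝ) = 2 * ⟪α, β⟫ / ⟪α, α⟫ := hn₁.symm
  have e2 : (n₂ : ℝ) = 2 * ⟪α, β⟫ / ⟪β, β⟫ := by rw [← hn₂, real_inner_comm]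
  have hprod : (n₁ : ℝ) * (n₂ : ℝ) < 4 := by
    rw [e1, e2, div_mul_div_comm, div_lt_iff₀ (by positivity)]
    nlinarith
  have hprodZ : n₁ * n₂ ≤ 3 := by
    have : ((n₁ * n₂ : ℤ) : ℝ) < 4 := by push_cast; linarith
    have : n₁ * n₂ < 4 := by exact_mod_cast this
    omega
  have hone : n₁ = -1 ∨ n₂ = -1 := by
    by_contra h
    push_neg at h
    have h1 : n₁ ≤ -2 := by omega
    have h2 : n₂ ≤ -2 := by omega
    nlinarith
  rcases hone with h | h
  · have := R.reflect α hα β hβ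
    rw [hn₁, h] at this
    push_cast at this
    rw [neg_one_smul] at this
    rw [sub_neg_eq_add] at this
    rwa [add_comm]
  · have := R.reflect β hβ α hα
    rw [hn₂, h] at this
    push_cast at this
    rw [neg_one_smul, sub_neg_eq_add] at this
    exact this

lemma RootSys.lemA2 (R : RootSys V) (hcr : R.IsCrystallographic) :
    ∀ n : ℕ, ∀ (s : V) (T : Finset V), T.card = n → s ∈ R.Φ → ↑T ⊆ R.Φ →
      T.sum id ∈ R.Φ → s + T.sum id ∈ R.Φ →
      (∀ Y ⊆ T, s + Y.sum id ≠ 0) → (∀ Y ⊆ T, Y.Nonempty → Y.sum id ≠ 0) →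
      ∃ β ∈ T, s + β ∈ R.Φ := by
  intro n
  induction n with
  | zero =>
    intro s T hc hs hT htΦ hsum hnv hnv2
    rw [Finset.card_eq_zero] at hc
    subst hc
    simp only [Finset.sum_empty] at htΦ
    exact absurd rfl (R.nonzero 0 htΦ)
  | succ n ih =>
    intro s T hc hs hT htΦ hsum hnv hnv2
    classical
    by_cases hneg : ∃ β ∈ T, ⟪s, β⟫ < 0
    · obtain ⟨β, hβT, hβ⟩ := hneg
      refine ⟨β, hβT, R.add_mem_of_inner_neg hcr hs (hT hβT) hβ ?_⟩
      have := hnv {β} (Finset.singleton_subset_iff.mpr hβT)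
      simpa using this
    · push_neg at hneg
      rcases Nat.eq_zero_or_pos n with hn | hn
      · -- |T| = 1
        subst hn
        rw [Finset.card_eq_one] at hc
        obtain ⟨β, rfl⟩ := hc
        refine ⟨β, Finset.mem_singleton_self β, ?_⟩
        simpa using hsum
      · -- |T| ≥ 2
        set t := T.sum id with htdef
        have hTne : T.Nonempty := Finset.card_pos.mp (by omega)
        have ht0 : t ≠ 0 := R.nonzero t htΦ
        have htt : (0:ℝ) < ⟪t, t⟫ := by
          rw [real_inner_self_eq_norm_sq]; exact pow_pos (norm_pos_iff.mpr ht0) 2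
        have hβ0 : ∃ β₀ ∈ T, (0:ℝ) < ⟪t, β₀⟫ := by
          by_contra hcon
          push_neg at hcon
          have : ⟪t, t⟫ ≤ 0 := by
            have : ⟪t, T.sum id⟫ = ∑ β ∈ T, ⟪t, β⟫ := by
              rw [inner_sum]; rfl
            rw [htdef, this]
            exact Finset.sum_nonpos hcon
          linarith
        obtain ⟨β₀, hβ₀T, hβ₀⟩ := hβ0
        set T' := T.erase β₀ with hT'def
        have hT'c : T'.card = n := by
          rw [hT'def, Finset.card_erase_of_mem hβ₀T, hc]; omega
        have hT'ne : T'.Nonempty := Finset.card_pos.mp (by omega)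
        have hT'sub : T' ⊆ T := Finset.erase_subset _ _
        have hsumT' : T'.sum id = t - β₀ := by
          have h := Finset.add_sum_erase T id hβ₀T
          rw [eq_sub_iff_add_eq, add_comm]
          exact h
        have ht'Φ : T'.sum id ∈ R.Φ := by
          rw [hsumT', sub_eq_add_neg]
          refine R.add_mem_of_inner_neg hcr htΦ (R.neg_mem (hT hβ₀T)) ?_ ?_
          · rw [inner_neg_right]; linarith
          · rw [← sub_eq_add_neg, ← hsumT']
            exact hnv2 T' hT'sub hT'ne
        have hst' : s + T'.sum id ∈ R.Φ := by
          have key : (s + t) + -β₀ ∈ R.Φ := by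
            refine R.add_mem_of_inner_neg hcr hsum (R.neg_mem (hT hβ₀T)) ?_ ?_
            · rw [inner_neg_right, inner_add_left]
              have := hneg β₀ hβ₀T
              linarith
            · intro hcon
              apply hnv T' hT'sub
              rw [hsumT']
              rw [htdef] at hcon ⊢
              rw [← sub_eq_add_neg] at hcon
              rw [add_sub_assoc] at hcon
              exact hcon
          have : (s + t) + -β₀ = s + (t - β₀) := by abel
          rw [this] at key
          rwa [hsumT']
        obtain ⟨β, hβT', hβΦ⟩ := ih s T' hT'c hs (fun x hx => hT (hT'sub hx)) ht'Φ hst'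
          (fun Y hY => hnv Y (hY.trans hT'sub)) (fun Y hY => hnv2 Y (hY.trans hT'sub))
        exact ⟨β, hT'sub hβT', hβΦ⟩

lemma RootSys.lemA (R : RootSys V) (hcr : R.IsCrystallographic)
    (s : V) (T : Finset V) (hs : s ∈ R.Φ) (hT : ↑T ⊆ R.Φ)
    (hsum : s + T.sum id ∈ R.Φ)
    (hnv : ∀ Y ⊆ T, s + Y.sum id ≠ 0)
    (hnv2 : ∀ Y ⊆ T, Y.Nonempty → Y.sum id ≠ 0)
    (hTne : T.Nonempty) :
    ∃ β ∈ T, s + β ∈ R.Φ := by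
  by_cases hneg : ∃ β ∈ T, ⟪s, β⟫ < 0
  · obtain ⟨β, hβT, hβ⟩ := hneg
    refine ⟨β, hβT, R.add_mem_of_inner_neg hcr hs (hT hβT) hβ ?_⟩
    have := hnv {β} (Finset.singleton_subset_iff.mpr hβT)
    simpa using this
  · push_neg at hneg
    have hs0 : s ≠ 0 := R.nonzero s hs
    have hss : (0:ℝ) < ⟪s, s⟫ := by
      rw [real_inner_self_eq_norm_sq]; exact pow_pos (norm_pos_iff.mpr hs0) 2
    have hst : (0:ℝ) ≤ ⟪s, T.sum id⟫ := by
      have : ⟪s, T.sum id⟫ = ∑ β ∈ T, ⟪s, β⟫ := by rw [inner_sum]; rfl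
      rw [this]
      exact Finset.sum_nonneg hneg
    have htΦ : T.sum id ∈ R.Φ := by
      have key : (s + T.sum id) + -s ∈ R.Φ := by
        refine R.add_mem_of_inner_neg hcr hsum (R.neg_mem hs) ?_ ?_
        · rw [inner_neg_right, inner_add_left]
          have := real_inner_comm (T.sum id) s
          linarith
        · have : (s + T.sum id) + -s = T.sum id := by abel
          rw [this]
          exact hnv2 T (le_refl T) hTne
      have : (s + T.sum id) + -s = T.sum id := by abel
      rwa [this] at key
    exact R.lemA2 hcr T.card s T rfl hs hT htΦ hsum hnv hnv2

lemma RootSys.step [DecidableEq V] (R : RootSys V) (hcr : R.IsCrystallographic)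
    (X : Finset V) (hX : ↑X ⊆ R.Φ) (hsum : X.sum id ∈ R.Φ)
    (hnv : ∀ Y ⊆ X, Y.Nonempty → Y.sum id ≠ 0)
    (S : Finset V) (hSX : S ⊆ X) (hS : S.sum id ∈ R.Φ) (hne : S ≠ X) :
    ∃ β, β ∈ X \ S ∧ (insert β S).sum id ∈ R.Φ := by
  set T := X \ S with hTdef
  have hTne : T.Nonempty := by
    rw [hTdef, Finset.sdiff_nonempty]
    exact fun h => hne (Finset.Subset.antisymm hSX h)
  have hTsub : T ⊆ X := Finset.sdiff_subset
  have hdisj : Disjoint S T := Finset.disjoint_sdiff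
  have hST : S.sum id + T.sum id = X.sum id := by
    rw [hTdef]
    rw [← Finset.sum_union (Finset.disjoint_sdiff)]
    rw [Finset.union_sdiff_of_subset hSX]
  have key : ∃ β ∈ T, S.sum id + β ∈ R.Φ := by
    refine R.lemA hcr (S.sum id) T hS (fun x hx => hX (hTsub hx)) ?_ ?_ ?_ hTne
    · rw [hST]; exact hsum
    · intro Y hY
      have hdisj' : Disjoint S Y := hdisj.mono_right hY
      have : S.sum id + Y.sum id = (S ∪ Y).sum id := (Finset.sum_union hdisj').symm
      rw [this]
      apply hnv (S ∪ Y) (Finset.union_subset hSX (hY.trans hTsub))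
      refine Finset.Nonempty.mono Finset.subset_union_left ?_
      rcases S.eq_empty_or_nonempty with h | h
      · exfalso
        rw [h] at hS
        simp only [Finset.sum_empty] at hS
        exact R.nonzero 0 hS rfl
      · exact h
    · intro Y hY hYne
      exact hnv Y (hY.trans hTsub) hYne
  obtain ⟨β, hβT, hβ⟩ := key
  refine ⟨β, hβT, ?_⟩
  have hβS : β ∉ S := (Finset.mem_sdiff.mp hβT).2
  rw [Finset.sum_insert hβS]
  rw [show id β + S.sum id = S.sum id + β from add_comm _ _]
  exact hβ

theorem stmt2 (R : RootSys V) (hcr : R.IsCrystallographic)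
    (X : Finset V) (hX : ↑X ⊆ R.Φ) (hsum : X.sum id ∈ R.Φ)
    (hnv : ∀ Y ⊆ X, Y.Nonempty → Y.sum id ≠ 0)
    (α : V) (hαX : α ∈ X) :
    ∃ F : ℕ → Finset V, F 1 = {α} ∧ F X.card = X ∧
      (∀ i, 1 ≤ i → i ≤ X.card → (F i).card = i ∧ F i ⊆ X ∧ (F i).sum id ∈ R.Φ) ∧
      (∀ i, 1 ≤ i → i < X.card → F i ⊂ F (i + 1)) := by
  classical
  set g : Finset V → Finset V := fun S =>
    if h : ∃ β, β ∈ X \ S ∧ (insert β S).sum id ∈ R.Φ then insert h.choose S else S with hg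
  set F : ℕ → Finset V := fun i => g^[i - 1] ({α} : Finset V) with hF
  have hF1 : F 1 = {α} := by simp [hF]
  have hFsucc : ∀ i : ℕ, 1 ≤ i → F (i + 1) = g (F i) := by
    intro i hi
    simp only [hF]
    have h : i + 1 - 1 = (i - 1) + 1 := by omega
    rw [h, Function.iterate_succ_apply']
  have key : ∀ i, 1 ≤ i → i ≤ X.card →
      α ∈ F i ∧ F i ⊆ X ∧ (F i).card = i ∧ (F i).sum id ∈ R.Φ := by
    intro i
    induction i with
    | zero => intro h1 _; omega
    | succ i ih =>
      intro h1 h2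
      rcases Nat.eq_zero_or_pos i with h0 | h0
      · subst h0
        rw [hF1]
        refine ⟨Finset.mem_singleton_self α, Finset.singleton_subset_iff.mpr hαX, rfl, ?_⟩
        simpa using hX hαX
      · obtain ⟨hαi, hsub, hcard, hΦ⟩ := ih h0 (by omega)
        have hne : F i ≠ X := by
          intro h
          rw [h] at hcard
          omega
        have hex := R.step hcr X hX hsum hnv (F i) hsub hΦ hne
        obtain ⟨hβmem, hβsum⟩ := hex.choose_spec
        have hgFi : g (F i) = insert hex.choose (F i) := by
          simp only [hg]
          rw [dif_pos hex]
        rw [hFsucc i h0, hgFi]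
        have hβX : hex.choose ∈ X := (Finset.mem_sdiff.mp hβmem).1
        have hβnotin : hex.choose ∉ F i := (Finset.mem_sdiff.mp hβmem).2
        refine ⟨Finset.mem_insert_of_mem hαi, Finset.insert_subset hβX hsub, ?_, hβsum⟩
        rw [Finset.card_insert_of_notMem hβnotin, hcard]
  have strict : ∀ i, 1 ≤ i → i < X.card → F i ⊂ F (i + 1) := by
    intro i h1 h2
    obtain ⟨hαi, hsub, hcard, hΦ⟩ := key i h1 (le_of_lt h2)
    have hne : F i ≠ X := by
      intro h
      rw [h] at hcard
      omega
    have hex := R.step hcr X hX hsum hnv (F i) hsub hΦ hne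
    obtain ⟨hβmem, hβsum⟩ := hex.choose_spec
    have hgFi : g (F i) = insert hex.choose (F i) := by
      simp only [hg]
      rw [dif_pos hex]
    rw [hFsucc i h1, hgFi]
    exact Finset.ssubset_insert (Finset.mem_sdiff.mp hβmem).2
  have hcard1 : 1 ≤ X.card := Finset.card_pos.mpr ⟨α, hαX⟩
  have hFn : F X.card = X := by
    obtain ⟨_, hsub, hcard, _⟩ := key X.card hcard1 le_rfl
    exact Finset.eq_of_subset_of_card_le hsub (le_of_eq hcard.symm)
  exact ⟨F, hF1, hFn,
    fun i h1 h2 => ⟨(key i h1 h2).2.2.1, (key i h1 h2).2.1, (key i h1 h2).2.2.2⟩, strict⟩
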